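/- Assume the standing hypotheses with $C_{\phi,w}$ densely defined and let $\alpha\in(0,1]$, $w_\alpha = w\cdot(\mathsf{h}_{\phi,w}/(\mathsf{h}_{\phi,w}\circ\phi))^{\alpha/2}$. Then $\mathsf{h}_{\phi,w_\alpha} = \big(\mathsf{E}_{\phi,w}(\mathsf{h}_{\phi,w}^\alpha)\circ\phi^{-1}\big)\cdot \mathsf{h}_{\phi,w}^{1-\alpha}$ a.e. $[\mu]$, where $\mathsf{E}_{\phi,w}(\cdot)$ denotes the conditional expectation with respect to the $\sigma$-algebra $\phi^{-1}(\mathscr A)$ and measure $\mu_w$, and $\mathsf{E}_{\phi,w}(f)\circ\phi^{-1}$ denotes the measurable function $g$ with $g\circ\phi=\mathsf{E}_{\phi,w}(f)$ a.e. $[\mu_w]$ and $g=g\cdot\chi_{\{\mathsf{h}_{\phi,w}>0\}}$ a.e. $[\mu]$. -/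

import Mathlib

open MeasureTheory ENNReal NNReal Filter Topology

variable {X : Type*} [MeasurableSpace X]

/-- The measure `μ_w` with density `|w|²` with respect to `μ`. -/
noncomputable def wcMeasure (μ : Measure X) (w : X → ℂ) : Measure X :=
  μ.withDensity fun x => (‖w x‖₊ : ℝ≥0∞) ^ 2

/-- The Radon–Nikodym derivative `h_{φ,w} = d(μ_w ∘ φ⁻¹)/dμ`. -/
noncomputable def wcDeriv (μ : Measure X) (w : X → ℂ) (φ : X → X) : X → ℝ≥0∞ :=
  ((wcMeasure μ w).map φ).rnDeriv μ

/-- The modified weight `w_α = w · (h_{φ,w}/(h_{φ,w}∘φ))^{α/2}` (interpreted a.e.). -/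
noncomputable def wcAlpha (μ : Measure X) (w : X → ℂ) (φ : X → X) (α : ℝ) : X → ℂ :=
  fun x => w x * (((wcDeriv μ w φ x / wcDeriv μ w φ (φ x)) ^ (α / 2)).toReal : ℂ)

/-- `E` is (a version of) the conditional expectation of the nonnegative function `f`
with respect to the σ-algebra `φ⁻¹(𝒜)` and the measure `ν`. -/
def IsCondExp (φ : X → X) (ν : Measure X) (f E : X → ℝ≥0∞) : Prop :=
  Measurable[MeasurableSpace.comap φ inferInstance] E ∧
    ∀ s : Set X, MeasurableSet s → ∫⁻ x in φ ⁻¹' s, E x ∂ν = ∫⁻ x in φ ⁻¹' s, f x ∂ν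

/-- `g = E ∘ φ⁻¹`: the measurable function with `g ∘ φ = E` a.e. `[ν]`,
vanishing a.e. `[μ]` on the set where `h = 0`. -/
def IsQuot (φ : X → X) (μ ν : Measure X) (h : X → ℝ≥0∞) (E g : X → ℝ≥0∞) : Prop :=
  Measurable g ∧ (∀ᵐ x ∂ν, g (φ x) = E x) ∧ (∀ᵐ x ∂μ, h x = 0 → g x = 0)

/-- `E` is (a version of) the conditional expectation of the complex function `f`
with respect to the σ-algebra `φ⁻¹(𝒜)` and the measure `ν`. -/
def IsCondExpC (φ : X → X) (ν : Measure X) (f E : X → ℂ) : Prop :=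
  Measurable[MeasurableSpace.comap φ inferInstance] E ∧
    ∀ s : Set X, MeasurableSet s → ν (φ ⁻¹' s) < ⊤ →
      ∫ x in φ ⁻¹' s, E x ∂ν = ∫ x in φ ⁻¹' s, f x ∂ν

/-- `f_w = χ_{{w ≠ 0}} f / w`. -/
noncomputable def fw (w f : X → ℂ) : X → ℂ := fun x => if w x = 0 then 0 else f x / w x


lemma aluthge_pullout {φ : X → X} (hφ : Measurable φ) (ν : Measure X) {f Ef : X → ℝ≥0∞}
    (hf : Measurable f)
    (hEm : Measurable[MeasurableSpace.comap φ inferInstance] Ef)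
    (heq : ∀ s : Set X, MeasurableSet s →
      ∫⁻ x in φ ⁻¹' s, Ef x ∂ν = ∫⁻ x in φ ⁻¹' s, f x ∂ν)
    {G : X → ℝ≥0∞} (hG : Measurable G) (s : Set X) (hs : MeasurableSet s) :
    ∫⁻ x in φ ⁻¹' s, G (φ x) * Ef x ∂ν = ∫⁻ x in φ ⁻¹' s, G (φ x) * f x ∂ν := by
  have hEm' : Measurable Ef := hEm.mono hφ.comap_le le_rfl
  refine Measurable.ennreal_induction
    (motive := fun G => ∫⁻ x in φ ⁻¹' s, G (φ x) * Ef x ∂ν = ∫⁻ x in φ ⁻¹' s, G (φ x) * f x ∂ν)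
    ?_ ?_ ?_ hG
  · intro c t ht
    have key : ∀ (F : X → ℝ≥0∞), Measurable F →
        ∫⁻ x in φ ⁻¹' s, t.indicator (fun _ => c) (φ x) * F x ∂ν
          = c * ∫⁻ x in φ ⁻¹' (t ∩ s), F x ∂ν := by
      intro F hF
      have h1 : (fun x => t.indicator (fun _ => c) (φ x) * F x)
          = (φ ⁻¹' t).indicator (fun x => c * F x) := by
        ext x
        by_cases hx : φ x ∈ t <;>
          simp [Set.indicator_apply, hx, Set.mem_preimage]
      rw [h1, lintegral_indicator (hφ ht), Measure.restrict_restrict (hφ ht),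
        lintegral_const_mul c hF, Set.preimage_inter]
    rw [key Ef hEm', key f hf, heq (t ∩ s) (ht.inter hs)]
  · intro F₁ F₂ _ hF₁ _ hP₁ hP₂
    simp only [Pi.add_apply, add_mul]
    rw [lintegral_add_left (f := fun x => F₁ (φ x) * Ef x) ((hF₁.comp hφ).mul hEm'),
      lintegral_add_left (f := fun x => F₁ (φ x) * f x) ((hF₁.comp hφ).mul hf),
      hP₁, hP₂]
  · intro F hFm hFmono hP
    have mono : ∀ (F' : X → ℝ≥0∞), Monotone fun n x => F n (φ x) * F' x :=
      fun F' n m hnm x => mul_le_mul_left (hFmono hnm _) _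
    simp only [ENNReal.iSup_mul]
    rw [lintegral_iSup (f := fun n x => F n (φ x) * Ef x)
        (fun n => ((hFm n).comp hφ).mul hEm') (mono Ef),
      lintegral_iSup (f := fun n x => F n (φ x) * f x)
        (fun n => ((hFm n).comp hφ).mul hf) (mono f)]
    exact iSup_congr hP

/-- `h_{φ,w_α} = (E_{φ,w}(h_{φ,w}^α) ∘ φ⁻¹) · h_{φ,w}^{1-α}` a.e. `[μ]`. -/
theorem aluthge_wco_deriv_alpha
    (μ : Measure X) [SigmaFinite μ] (w : X → ℂ) (φ : X → X)
    (hw : Measurable w) (hφ : Measurable φ)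
    (habs : (wcMeasure μ w).map φ ≪ μ)
    (hfin : ∀ᵐ x ∂μ, wcDeriv μ w φ x < ⊤)
    (α : ℝ) (hα : α ∈ Set.Ioc (0 : ℝ) 1)
    (E g : X → ℝ≥0∞)
    (hE : IsCondExp φ (wcMeasure μ w) (fun x => wcDeriv μ w φ x ^ α) E)
    (hg : IsQuot φ μ (wcMeasure μ w) (wcDeriv μ w φ) E g) :
    ∀ᵐ x ∂μ, wcDeriv μ (wcAlpha μ w φ α) φ x = g x * wcDeriv μ w φ x ^ (1 - α) := by
  obtain ⟨hα0, hα1⟩ := hα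
  obtain ⟨hEmeas, hEeq⟩ := hE
  obtain ⟨hgm, hgφ, hg0⟩ := hg
  set h : X → ℝ≥0∞ := wcDeriv μ w φ with hh
  set ν : Measure X := wcMeasure μ w with hνdef
  have hmh : Measurable h := Measure.measurable_rnDeriv _ _
  have hνac : ν ≪ μ := withDensity_absolutelyContinuous μ _
  haveI hsf : SFinite ν := by rw [hνdef, wcMeasure]; infer_instance
  have hmap : ν.map φ = μ.withDensity h :=
    (Measure.withDensity_rnDeriv_eq _ _ habs).symm
  -- a.e. ν facts
  have A1 : ∀ᵐ x ∂ν, h x ≠ ⊤ := hνac.ae_le (hfin.mono fun x hx => hx.ne)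
  have hset0 : MeasurableSet {y | h y = 0} := hmh (measurableSet_singleton 0)
  have A2 : ∀ᵐ x ∂ν, h (φ x) ≠ 0 := by
    have h0 : ν (φ ⁻¹' {y | h y = 0}) = 0 := by
      rw [← Measure.map_apply hφ hset0, hmap, withDensity_apply _ hset0]
      calc ∫⁻ y in {y | h y = 0}, h y ∂μ
          = ∫⁻ y in {y | h y = 0}, 0 ∂μ :=
            setLIntegral_congr_fun hset0 (fun y hy => hy)
        _ = 0 := by simp
    refine ae_iff.mpr ?_
    simpa [not_not] using h0
  -- the auxiliary density factor
  set k : X → ℝ≥0∞ :=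
    fun x => (ENNReal.ofReal ((h x / h (φ x)) ^ (α / 2)).toReal) ^ 2 with hk
  have hkmeas : Measurable k :=
    ((ENNReal.measurable_toReal.comp
      (((hmh.div (hmh.comp hφ)).pow_const (α / 2)))).ennreal_ofReal).pow_const 2
  -- pointwise: ‖w_α‖² = ‖w‖² * k
  have hpt : ∀ x, ((‖wcAlpha μ w φ α x‖₊ : ℝ≥0∞) ^ 2)
      = (‖w x‖₊ : ℝ≥0∞) ^ 2 * k x := by
    intro x
    simp only [wcAlpha, ← hh, nnnorm_mul, ENNReal.coe_mul, mul_pow, Complex.nnnorm_real, hk]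
    rw [← enorm_eq_nnnorm ((h x / h (φ x)) ^ (α / 2)).toReal, Real.enorm_eq_ofReal ENNReal.toReal_nonneg]
  -- a.e. [ν]: k = (h∘φ)^(-α) * h^α
  have hkae : ∀ᵐ x ∂ν, k x = (h (φ x) ^ α)⁻¹ * h x ^ α := by
    filter_upwards [A1, A2] with x hx1 hx2
    have hfin' : h x / h (φ x) ≠ ⊤ := (ENNReal.div_lt_top hx1 hx2).ne
    have ha : (h x / h (φ x)) ^ (α / 2) ≠ ⊤ :=
      (ENNReal.rpow_lt_top_of_nonneg (by positivity) hfin').ne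
    have h2 : ((h x / h (φ x)) ^ (α / 2)) ^ (2 : ℕ) = (h x / h (φ x)) ^ α := by
      rw [← ENNReal.rpow_natCast ((h x / h (φ x)) ^ (α / 2)) 2, ← ENNReal.rpow_mul]
      norm_num
    show (ENNReal.ofReal ((h x / h (φ x)) ^ (α / 2)).toReal) ^ 2 = _
    rw [ENNReal.ofReal_toReal ha, h2, ENNReal.div_rpow_of_nonneg _ _ hα0.le,
      div_eq_mul_inv, mul_comm]
  -- measurability of the target density
  have hD : Measurable fun y => g y * h y ^ (1 - α) := hgm.mul (hmh.pow_const _)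
  have hmw : Measurable fun x => (‖w x‖₊ : ℝ≥0∞) ^ 2 :=
    (hw.nnnorm.coe_nnreal_ennreal).pow_const 2
  have hGmeas : Measurable fun y => (h y ^ α)⁻¹ := (hmh.pow_const α).inv
  -- the measure identity
  have Meq : (wcMeasure μ (wcAlpha μ w φ α)).map φ
      = μ.withDensity fun y => g y * h y ^ (1 - α) := by
    ext s hs
    rw [Measure.map_apply hφ hs, wcMeasure, withDensity_apply _ (hφ hs),
      withDensity_apply _ hs]
    calc
      ∫⁻ x in φ ⁻¹' s, (‖wcAlpha μ w φ α x‖₊ : ℝ≥0∞) ^ 2 ∂μ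
          = ∫⁻ x in φ ⁻¹' s, ((fun y => (‖w y‖₊ : ℝ≥0∞) ^ 2) * k) x ∂μ :=
            lintegral_congr fun x => hpt x
      _ = ∫⁻ x in φ ⁻¹' s, k x ∂ν := by
            rw [hνdef, wcMeasure,
              setLIntegral_withDensity_eq_setLIntegral_mul μ hmw hkmeas (hφ hs)]
      _ = ∫⁻ x in φ ⁻¹' s, (h (φ x) ^ α)⁻¹ * h x ^ α ∂ν :=
            lintegral_congr_ae (ae_restrict_of_ae hkae)
      _ = ∫⁻ x in φ ⁻¹' s, (h (φ x) ^ α)⁻¹ * E x ∂ν :=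
            (aluthge_pullout hφ ν (hmh.pow_const α) hEmeas hEeq hGmeas s hs).symm
      _ = ∫⁻ x in φ ⁻¹' s, (h (φ x) ^ α)⁻¹ * g (φ x) ∂ν := by
            refine lintegral_congr_ae (ae_restrict_of_ae ?_)
            filter_upwards [hgφ] with x hx
            rw [hx]
      _ = ∫⁻ y in s, (h y ^ α)⁻¹ * g y ∂(ν.map φ) :=
            (setLIntegral_map hs (hGmeas.mul hgm) hφ).symm
      _ = ∫⁻ y in s, h y * ((h y ^ α)⁻¹ * g y) ∂μ := by
            rw [hmap, setLIntegral_withDensity_eq_setLIntegral_mul μ (g := fun y => (h y ^ α)⁻¹ * g y) hmh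
              (hGmeas.mul hgm) hs]
            rfl
      _ = ∫⁻ y in s, g y * h y ^ (1 - α) ∂μ := by
            refine lintegral_congr_ae (ae_restrict_of_ae ?_)
            filter_upwards [hfin, hg0] with y hy1 hy2
            rcases eq_or_ne (h y) 0 with h0 | h0
            · rw [h0, hy2 h0]; simp
            · rw [ENNReal.rpow_sub 1 α h0 hy1.ne, ENNReal.rpow_one, div_eq_mul_inv]
              ring
  have final : (μ.withDensity fun y => g y * h y ^ (1 - α)).rnDeriv μ
      =ᵐ[μ] fun y => g y * h y ^ (1 - α) := Measure.rnDeriv_withDensity μ hD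
  have hrw : wcDeriv μ (wcAlpha μ w φ α) φ
      = (μ.withDensity fun y => g y * h y ^ (1 - α)).rnDeriv μ := by
    rw [wcDeriv, Meq]
  rw [hrw]
  exact final
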